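/- arXiv:2108.02151 — 3 statements merged into one kernel-verified Lean document; each statement's English description precedes it below -/
import Mathlib

section
/- Let X be a real random variable such that t ↦ ℙ(|X| ≤ t) is strictly increasing on (0, ∞), let 0 < v₀ < 1 and r ∈ (0,1). For each k ≥ 1, suppose η_k has law equal to the mixture assigning weight r^k to the law of X and weight 1 − r^k to the law of √v₀ · X. Then for every ε > 0, ℙ(|η_k| ≤ ε) < ℙ(|η_{k+1}| ≤ ε). -/
open MeasureTheory
open scoped ENNReal

/-- Corollary 4: let `X` be a real random variable whose absolute-value cdf
`t ↦ ℙ(|X| ≤ t)` is strictly increasing on `(0,∞)`, let `0 < v₀ < 1` and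
`r ∈ (0,1)`. If each `η_k` has law the mixture assigning weight `r^k` to the law of
`X` and weight `1 − r^k` to the law of `√v₀ · X`, then the mass of `η_k` near zero
is strictly increasing in `k`. -/
theorem nmig_ordered_shrinkage
    {Ω Ω' : Type*} [MeasurableSpace Ω] [MeasurableSpace Ω']
    (μ : Measure Ω) (μ' : Measure Ω')
    [IsProbabilityMeasure μ] [IsProbabilityMeasure μ']
    (X : Ω → ℝ) (hX : Measurable X)
    (hmono : StrictMonoOn (fun t : ℝ => μ {ω | |X ω| ≤ t}) (Set.Ioi (0 : ℝ)))
    (v₀ : ℝ) (hv0 : 0 < v₀) (hv1 : v₀ < 1)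
    (r : ℝ) (hr0 : 0 < r) (hr1 : r < 1)
    (η : ℕ → Ω' → ℝ) (hη : ∀ k, Measurable (η k))
    (hlaw : ∀ k, 1 ≤ k → Measure.map (η k) μ'
        = ENNReal.ofReal (r ^ k) • Measure.map X μ
          + ENNReal.ofReal (1 - r ^ k) • Measure.map (fun ω => Real.sqrt v₀ * X ω) μ) :
    ∀ ε : ℝ, 0 < ε → ∀ k, 1 ≤ k →
      μ' {ω | |η k ω| ≤ ε} < μ' {ω | |η (k + 1) ω| ≤ ε} := by
  intro ε hε k hk
  have hsq0 : 0 < Real.sqrt v₀ := Real.sqrt_pos.mpr hv0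
  have hsq1 : Real.sqrt v₀ < 1 := by
    rw [show (1:ℝ) = Real.sqrt 1 by simp]
    exact Real.sqrt_lt_sqrt hv0.le hv1
  set S : Set ℝ := {x | |x| ≤ ε} with hS
  have hSm : MeasurableSet S := measurableSet_le measurable_abs measurable_const
  set A : ℝ≥0∞ := μ {ω | |X ω| ≤ ε} with hA
  set B : ℝ≥0∞ := μ {ω | |X ω| ≤ ε / Real.sqrt v₀} with hB
  have hAB : A < B := by
    have h1 : ε < ε / Real.sqrt v₀ := by
      rw [lt_div_iff₀ hsq0]
      nlinarith
    exact hmono (Set.mem_Ioi.mpr hε) (Set.mem_Ioi.mpr (hε.trans h1)) h1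
  have hmapX : Measure.map X μ S = A := by
    rw [Measure.map_apply hX hSm]; rfl
  have hmapY : Measure.map (fun ω => Real.sqrt v₀ * X ω) μ S = B := by
    rw [Measure.map_apply (hX.const_mul (Real.sqrt v₀)) hSm]
    congr 1
    ext ω
    simp only [Set.mem_preimage, hS, Set.mem_setOf_eq, hB]
    rw [abs_mul, abs_of_pos hsq0, le_div_iff₀ hsq0, mul_comm]
  have key : ∀ m, 1 ≤ m → μ' {ω | |η m ω| ≤ ε}
      = ENNReal.ofReal (r ^ m) * A + ENNReal.ofReal (1 - r ^ m) * B := by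
    intro m hm
    have : μ' {ω | |η m ω| ≤ ε} = Measure.map (η m) μ' S := by
      rw [Measure.map_apply (hη m) hSm]; rfl
    rw [this, hlaw m hm]
    simp [Measure.add_apply, Measure.smul_apply, hmapX, hmapY, smul_eq_mul]
  rw [key k hk, key (k+1) (le_trans hk (Nat.le_succ k))]
  have hrk : r ^ (k+1) < r ^ k := by
    have := pow_lt_pow_right_of_lt_one₀ hr0 hr1 (Nat.lt_succ_self k)
    simpa using this
  have hrkpos : 0 < r ^ (k+1) := pow_pos hr0 _
  set c : ℝ≥0∞ := ENNReal.ofReal (r ^ k - r ^ (k+1)) with hc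
  have hc0 : c ≠ 0 := by
    simp [hc, ENNReal.ofReal_eq_zero, not_le, sub_pos, hrk]
  have hctop : c ≠ ⊤ := ENNReal.ofReal_ne_top
  have hsplit1 : ENNReal.ofReal (r ^ k) = ENNReal.ofReal (r ^ (k+1)) + c := by
    rw [hc, ← ENNReal.ofReal_add hrkpos.le (by linarith)]
    ring_nf
  have hsplit2 : ENNReal.ofReal (1 - r ^ (k+1)) = ENNReal.ofReal (1 - r ^ k) + c := by
    have hk1 : r ^ k ≤ 1 := pow_le_one₀ hr0.le hr1.le
    rw [hc, ← ENNReal.ofReal_add (by linarith) (by linarith)]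
    ring_nf
  rw [hsplit1, hsplit2]
  have hAle : A ≠ ⊤ := (measure_lt_top μ _).ne
  have hBle : B ≠ ⊤ := (measure_lt_top μ _).ne
  have hcAB : c * A < c * B :=
    (ENNReal.mul_lt_mul_iff_right hc0 hctop).mpr hAB
  calc (ENNReal.ofReal (r ^ (k+1)) + c) * A + ENNReal.ofReal (1 - r ^ k) * B
      = (ENNReal.ofReal (r ^ (k+1)) * A + ENNReal.ofReal (1 - r ^ k) * B) + c * A := by ring
    _ < (ENNReal.ofReal (r ^ (k+1)) * A + ENNReal.ofReal (1 - r ^ k) * B) + c * B := by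
        exact ENNReal.add_lt_add_left (by
          exact ENNReal.add_ne_top.mpr ⟨ENNReal.mul_ne_top ENNReal.ofReal_ne_top hAle,
            ENNReal.mul_ne_top ENNReal.ofReal_ne_top hBle⟩) hcAB
    _ = ENNReal.ofReal (r ^ (k+1)) * A + (ENNReal.ofReal (1 - r ^ k) + c) * B := by ring
end

section
/- For every real t with 0 < t < 1, (2/π) · arctan(t) > 1 − 1/(1 + t²). -/
open Real

noncomputable def auxF : ℝ → ℝ := fun t => (2 / Real.pi) * Real.arctan t - 1 + 1 / (1 + t ^ 2)

lemma auxF_hasDerivAt (x : ℝ) :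
    HasDerivAt auxF
      (2 / (1 + x ^ 2) ^ 2 * ((1 + x ^ 2) / Real.pi - x)) x := by
  have hx : (1 : ℝ) + x ^ 2 ≠ 0 := by positivity
  have h1 : HasDerivAt (fun t : ℝ => (2 / Real.pi) * Real.arctan t)
      ((2 / Real.pi) * (1 / (1 + x ^ 2))) x :=
    (Real.hasDerivAt_arctan x).const_mul _
  have h2 : HasDerivAt (fun t : ℝ => 1 + t ^ 2) (2 * x) x := by
    simpa using (hasDerivAt_pow 2 x).const_add 1
  have h3 : HasDerivAt (fun t : ℝ => 1 / (1 + t ^ 2))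
      (-(2 * x) / (1 + x ^ 2) ^ 2) x := by
    rw [show (fun t : ℝ => 1 / (1 + t ^ 2)) = (fun t : ℝ => 1 + t ^ 2)⁻¹ by funext t; simp [one_div]]
    exact h2.inv hx
  have : HasDerivAt auxF (2 / Real.pi * (1 / (1 + x ^ 2)) + -(2 * x) / (1 + x ^ 2) ^ 2) x :=
    ((h1.sub_const 1).add h3)
  convert this using 1
  have hpi := Real.pi_ne_zero
  field_simp
  ring

lemma auxF_zero : auxF 0 = 0 := by simp [auxF]

lemma auxF_one : auxF 1 = 0 := by
  have hpi := Real.pi_ne_zero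
  simp only [auxF, Real.arctan_one]
  field_simp
  ring

lemma auxF_cont : Continuous auxF := by
  have hx : ∀ x : ℝ, (1 : ℝ) + x ^ 2 ≠ 0 := fun x => by positivity
  exact (continuous_const.mul Real.continuous_arctan).sub continuous_const |>.add
    (continuous_const.div (by continuity) hx)

/-- Key analytic inequality in the proof of Lemma 4: for `0 < t < 1`,
`(2/π) arctan t > 1 − 1/(1 + t²)`. -/
theorem arctan_lower_bound (t : ℝ) (ht0 : 0 < t) (ht1 : t < 1) :
    (2 / Real.pi) * Real.arctan t > 1 - 1 / (1 + t ^ 2) := by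
  set s : ℝ := Real.sqrt (Real.pi ^ 2 - 4) with hs
  have hpi : (3.14 : ℝ) < Real.pi := by
    have := Real.pi_gt_d6; linarith
  have hs0 : 0 ≤ s := Real.sqrt_nonneg _
  have hs2 : s ^ 2 = Real.pi ^ 2 - 4 := Real.sq_sqrt (by nlinarith)
  set t₀ : ℝ := (Real.pi - s) / 2 with ht₀
  have hslt : s < Real.pi := by nlinarith
  have ht₀pos : 0 < t₀ := by simp only [ht₀]; linarith
  have ht₀lt1 : t₀ < 1 := by
    have : Real.pi - 2 < s := by nlinarith
    simp only [ht₀]; linarith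
  -- derivative sign
  have hderiv_pos : ∀ x ∈ Set.Ioo (0:ℝ) t₀, 0 < deriv auxF x := by
    intro x hx
    rw [(auxF_hasDerivAt x).deriv]
    have h1 : 0 < 2 / (1 + x ^ 2) ^ 2 := by positivity
    have h2 : 0 < (1 + x ^ 2) / Real.pi - x := by
      rw [sub_pos, lt_div_iff₀ Real.pi_pos]
      have hxlt : x < t₀ := hx.2
      have hx0 : 0 < x := hx.1
      nlinarith [hx.2, hx.1, hs2, hs0]
    positivity
  have hderiv_neg : ∀ x ∈ Set.Ioo t₀ (1:ℝ), deriv auxF x < 0 := by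
    intro x hx
    rw [(auxF_hasDerivAt x).deriv]
    have h1 : 0 < 2 / (1 + x ^ 2) ^ 2 := by positivity
    have h2 : (1 + x ^ 2) / Real.pi - x < 0 := by
      rw [sub_neg, div_lt_iff₀ Real.pi_pos]
      -- (t₀ - x)((π+s)/2 - x) < 0 since x > t₀ and x < 1 < (π+s)/2
      have hx1 : x < 1 := hx.2
      have hx2 : t₀ < x := hx.1
      have : 1 < (Real.pi + s) / 2 := by nlinarith
      nlinarith [hs2]
    nlinarith
  have hmono : StrictMonoOn auxF (Set.Icc 0 t₀) :=
    strictMonoOn_of_deriv_pos (convex_Icc _ _) auxF_cont.continuousOn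
      (by rwa [interior_Icc])
  have hanti : StrictAntiOn auxF (Set.Icc t₀ 1) :=
    strictAntiOn_of_deriv_neg (convex_Icc _ _) auxF_cont.continuousOn
      (by rwa [interior_Icc])
  have key : 0 < auxF t := by
    rcases le_or_gt t t₀ with h | h
    · have := hmono (Set.left_mem_Icc.2 ht₀pos.le)
        (Set.mem_Icc.2 ⟨ht0.le, h⟩) ht0
      rwa [auxF_zero] at this
    · have := hanti (Set.mem_Icc.2 ⟨h.le, ht1.le⟩)
        (Set.right_mem_Icc.2 ht₀lt1.le) ht1
      rwa [auxF_one] at this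
  have : 0 < (2 / Real.pi) * Real.arctan t - 1 + 1 / (1 + t ^ 2) := key
  linarith
end

section
/- Let η, η′ and ξ be real random variables on a common probability space such that ξ is independent of the pair (η, η′) and ℙ(ξ = 0) = 0. If ℙ(|η| ≤ δ) < ℙ(|η′| ≤ δ) for every δ > 0, then ℙ(|η · ξ| ≤ ε) < ℙ(|η′ · ξ| ≤ ε) for every ε > 0. -/
open MeasureTheory ProbabilityTheory

/-- Proposition 3 (parameter expansion preserves the ordering): if `ξ` is independent
of the pair `(η, η′)`, has no atom at `0`, and `ℙ(|η| ≤ δ) < ℙ(|η′| ≤ δ)` for every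
`δ > 0`, then `ℙ(|η ξ| ≤ ε) < ℙ(|η′ ξ| ≤ ε)` for every `ε > 0`. -/
theorem product_ordered_shrinkage
    {Ω : Type*} [MeasurableSpace Ω] (μ : Measure Ω) [IsProbabilityMeasure μ]
    (η η' ξ : Ω → ℝ) (hη : Measurable η) (hη' : Measurable η') (hξ : Measurable ξ)
    (hindep : IndepFun ξ (fun ω => (η ω, η' ω)) μ)
    (h0 : μ {ω | ξ ω = 0} = 0)
    (hlt : ∀ δ : ℝ, 0 < δ → μ {ω | |η ω| ≤ δ} < μ {ω | |η' ω| ≤ δ}) :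
    ∀ ε : ℝ, 0 < ε →
      μ {ω | |η ω * ξ ω| ≤ ε} < μ {ω | |η' ω * ξ ω| ≤ ε} := by
  intro ε hε
  set p : Ω → ℝ × ℝ := fun ω => (η ω, η' ω) with hp
  have hpm : Measurable p := hη.prodMk hη'
  set ν : Measure ℝ := μ.map ξ with hν
  set ρ : Measure (ℝ × ℝ) := μ.map p with hρ
  have hνprob : IsProbabilityMeasure ν := Measure.isProbabilityMeasure_map hξ.aemeasurable
  have hρprob : IsProbabilityMeasure ρ := Measure.isProbabilityMeasure_map hpm.aemeasurable
  have hmap : μ.map (fun ω => (ξ ω, p ω)) = ν.prod ρ :=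
    (indepFun_iff_map_prod_eq_prod_map_map hξ.aemeasurable hpm.aemeasurable).mp hindep
  -- sets
  have hS1 : MeasurableSet {q : ℝ × ℝ × ℝ | |q.2.1 * q.1| ≤ ε} :=
    measurableSet_le (measurable_snd.fst.mul measurable_fst).abs measurable_const
  have hS2 : MeasurableSet {q : ℝ × ℝ × ℝ | |q.2.2 * q.1| ≤ ε} :=
    measurableSet_le (measurable_snd.snd.mul measurable_fst).abs measurable_const
  have hTm : Measurable (fun ω => (ξ ω, p ω)) := hξ.prodMk hpm
  have key : ∀ (S : Set (ℝ × ℝ × ℝ)), MeasurableSet S →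
      μ ((fun ω => (ξ ω, p ω)) ⁻¹' S) = ∫⁻ x, ρ (Prod.mk x ⁻¹' S) ∂ν := by
    intro S hS
    rw [← Measure.map_apply hTm hS, hmap, Measure.prod_apply hS]
  have e1 : μ {ω | |η ω * ξ ω| ≤ ε} = ∫⁻ x, ρ {a : ℝ × ℝ | |a.1 * x| ≤ ε} ∂ν := by
    have := key _ hS1
    simpa using this
  have e2 : μ {ω | |η' ω * ξ ω| ≤ ε} = ∫⁻ x, ρ {a : ℝ × ℝ | |a.2 * x| ≤ ε} ∂ν := by
    have := key _ hS2
    simpa using this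
  rw [e1, e2]
  -- measurability of the integrands
  have hg : Measurable (fun x => ρ {a : ℝ × ℝ | |a.2 * x| ≤ ε}) := by
    exact measurable_measure_prodMk_left (ν := ρ) hS2
  -- a.e. strict inequality
  have hae : ∀ᵐ x ∂ν, ρ {a : ℝ × ℝ | |a.1 * x| ≤ ε} < ρ {a : ℝ × ℝ | |a.2 * x| ≤ ε} := by
    have hne : ∀ᵐ x ∂ν, x ≠ 0 := by
      rw [ae_iff]
      simp only [ne_eq, not_not]
      rw [show {x : ℝ | x = 0} = {(0:ℝ)} by ext; simp,
        Measure.map_apply hξ (measurableSet_singleton 0)]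
      exact h0
    filter_upwards [hne] with x hx
    have hxpos : 0 < |x| := abs_pos.mpr hx
    have hδ : 0 < ε / |x| := div_pos hε hxpos
    have hset1 : {a : ℝ × ℝ | |a.1 * x| ≤ ε} = {a : ℝ × ℝ | |a.1| ≤ ε / |x|} := by
      ext a
      simp only [Set.mem_setOf_eq, abs_mul, le_div_iff₀ hxpos]
    have hset2 : {a : ℝ × ℝ | |a.2 * x| ≤ ε} = {a : ℝ × ℝ | |a.2| ≤ ε / |x|} := by
      ext a
      simp only [Set.mem_setOf_eq, abs_mul, le_div_iff₀ hxpos]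
    rw [hset1, hset2]
    have m1 : MeasurableSet {a : ℝ × ℝ | |a.1| ≤ ε / |x|} :=
      measurableSet_le measurable_fst.abs measurable_const
    have m2 : MeasurableSet {a : ℝ × ℝ | |a.2| ≤ ε / |x|} :=
      measurableSet_le measurable_snd.abs measurable_const
    rw [hρ, Measure.map_apply hpm m1, Measure.map_apply hpm m2]
    exact hlt _ hδ
  refine lintegral_strict_mono (IsProbabilityMeasure.ne_zero ν) hg.aemeasurable ?_ hae
  have : (∫⁻ x, ρ {a : ℝ × ℝ | |a.1 * x| ≤ ε} ∂ν) ≤ 1 := by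
    calc (∫⁻ x, ρ {a : ℝ × ℝ | |a.1 * x| ≤ ε} ∂ν) ≤ ∫⁻ _, 1 ∂ν :=
          lintegral_mono fun x => prob_le_one
      _ = 1 := by simp
  exact (lt_of_le_of_lt this ENNReal.one_lt_top).ne
end
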